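/- arXiv:1706.03591 — 5 statements merged into one kernel-verified Lean document; each statement's English description precedes it below -/
import Mathlib

section
/- Let n ≥ k and d ≥ k. For any orthogonal matrix Q ∈ ℝ^{d×d}, the SC cost C_Φ and the CSC cost C_Ψ satisfy C_Φ ≤ C_Ψ ≤ C_Φ + 2·‖Ψ − Φ I_{k×d} Q‖_F. -/
open Matrix MeasureTheory ProbabilityTheory Finset

noncomputable section

/-- The `a × b` matrix with ones on the main diagonal and zeros elsewhere. -/
def rectId (a b : ℕ) : Matrix (Fin a) (Fin b) ℝ :=
  Matrix.of fun i j => if (i : ℕ) = (j : ℕ) then 1 else 0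

/-- Frobenius norm of a real matrix. -/
def frob {a b : ℕ} (M : Matrix (Fin a) (Fin b) ℝ) : ℝ :=
  Real.sqrt (∑ i, ∑ j, (M i j) ^ 2)

/-- Euclidean norm of a vector. -/
def enorm2 {a : ℕ} (v : Fin a → ℝ) : ℝ :=
  Real.sqrt (∑ i, (v i) ^ 2)

/-- `X` is the cluster-indicator matrix of the partition of `Fin n` into the
(nonempty) fibers of the surjective map `f : Fin n → Fin k`. -/
def IsIndicatorOf {n k : ℕ} (f : Fin n → Fin k) (X : Matrix (Fin n) (Fin k) ℝ) : Prop :=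
  Function.Surjective f ∧
    ∀ i j, X i j =
      if f i = j then 1 / Real.sqrt ((Finset.univ.filter fun i' => f i' = j).card) else 0

/-- `X` is a cluster-indicator matrix of a partition into `k` nonempty clusters. -/
def IsIndicator {n k : ℕ} (X : Matrix (Fin n) (Fin k) ℝ) : Prop :=
  ∃ f : Fin n → Fin k, IsIndicatorOf f X

/-- The k-means cost of the assignment `X` on the feature matrix `M`. -/
def kmeansCost {n k m : ℕ} (M : Matrix (Fin n) (Fin m) ℝ)
    (X : Matrix (Fin n) (Fin k) ℝ) : ℝ :=
  frob (M - X * Xᵀ * M)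

/-- `X` minimizes the k-means cost on features `M` over all indicator matrices. -/
def IsOptAssign {n k m : ℕ} (M : Matrix (Fin n) (Fin m) ℝ)
    (X : Matrix (Fin n) (Fin k) ℝ) : Prop :=
  IsIndicator X ∧
    ∀ Y : Matrix (Fin n) (Fin k) ℝ, IsIndicator Y → kmeansCost M X ≤ kmeansCost M Y

/-- Law of an `n × d` random matrix with i.i.d. Gaussian entries of
mean `0` and variance `1 / d`. -/
def gaussMeasure (n d : ℕ) : Measure (Fin n → Fin d → ℝ) :=
  Measure.pi fun _ => Measure.pi fun _ => gaussianReal 0 (d : NNReal)⁻¹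

/-! ### Auxiliary lemmas -/

lemma frob_nonneg' {a b : ℕ} (M : Matrix (Fin a) (Fin b) ℝ) : 0 ≤ frob M :=
  Real.sqrt_nonneg _

/-- View a matrix as a point of Euclidean space. -/
def toE {a b : ℕ} (M : Matrix (Fin a) (Fin b) ℝ) : EuclideanSpace ℝ (Fin a × Fin b) :=
  WithLp.toLp 2 (fun p : Fin a × Fin b => M p.1 p.2)

lemma frob_eq_norm {a b : ℕ} (M : Matrix (Fin a) (Fin b) ℝ) : frob M = ‖toE M‖ := by
  rw [EuclideanSpace.norm_eq, frob]
  congr 1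
  rw [Fintype.sum_prod_type]
  simp [toE, sq_abs]

lemma frob_add_le {a b : ℕ} (A B : Matrix (Fin a) (Fin b) ℝ) :
    frob (A + B) ≤ frob A + frob B := by
  rw [frob_eq_norm, frob_eq_norm, frob_eq_norm]
  have h : toE (A + B) = toE A + toE B := by ext; simp [toE]
  rw [h]
  exact norm_add_le _ _

lemma frob_neg {a b : ℕ} (A : Matrix (Fin a) (Fin b) ℝ) : frob (-A) = frob A := by
  unfold frob; congr 1; simp

lemma frob_sub_le' {a b : ℕ} (A B : Matrix (Fin a) (Fin b) ℝ) :
    frob (A - B) ≤ frob A + frob B := by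
  have h := frob_add_le A (-B)
  rw [← sub_eq_add_neg, frob_neg] at h
  exact h

lemma sum_sq_eq_trace {a b : ℕ} (M : Matrix (Fin a) (Fin b) ℝ) :
    ∑ i, ∑ j, (M i j) ^ 2 = Matrix.trace (M * Mᵀ) := by
  simp [Matrix.trace, Matrix.diag, Matrix.mul_apply, sq]

lemma frob_mul_rowOrtho {a k d : ℕ} (M : Matrix (Fin a) (Fin k) ℝ)
    (B : Matrix (Fin k) (Fin d) ℝ) (hB : B * Bᵀ = 1) : frob (M * B) = frob M := by
  unfold frob
  congr 1
  rw [sum_sq_eq_trace, sum_sq_eq_trace, Matrix.transpose_mul, Matrix.mul_assoc,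
    ← Matrix.mul_assoc B, hB, Matrix.one_mul]

lemma frob_proj_contract {a b : ℕ} (P : Matrix (Fin a) (Fin a) ℝ)
    (hPt : Pᵀ = P) (hPP : P * P = P) (M : Matrix (Fin a) (Fin b) ℝ) :
    frob (M - P * M) ≤ frob M := by
  apply Real.sqrt_le_sqrt
  have hPPM : P * (P * M) = P * M := by rw [← Matrix.mul_assoc, hPP]
  have key : (M - P * M)ᵀ * (M - P * M) + (P * M)ᵀ * (P * M) = Mᵀ * M := by
    simp only [Matrix.transpose_sub, Matrix.transpose_mul, hPt, Matrix.sub_mul,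
      Matrix.mul_sub, Matrix.mul_assoc, hPPM]
    abel
  have t : ∀ (N : Matrix (Fin a) (Fin b) ℝ), Matrix.trace (N * Nᵀ) = Matrix.trace (Nᵀ * N) :=
    fun N => Matrix.trace_mul_comm N Nᵀ
  have h1 : ∑ i, ∑ j, ((M - P * M) i j) ^ 2 + ∑ i, ∑ j, ((P * M) i j) ^ 2
      = ∑ i, ∑ j, (M i j) ^ 2 := by
    rw [sum_sq_eq_trace, sum_sq_eq_trace, sum_sq_eq_trace, t, t, t, ← Matrix.trace_add, key]
  have h2 : 0 ≤ ∑ i, ∑ j, ((P * M) i j) ^ 2 :=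
    Finset.sum_nonneg fun i _ => Finset.sum_nonneg fun j _ => sq_nonneg _
  linarith

lemma indicator_orth {n k : ℕ} {X : Matrix (Fin n) (Fin k) ℝ} (h : IsIndicator X) :
    Xᵀ * X = 1 := by
  obtain ⟨f, hf, hX⟩ := h
  ext j j'
  simp only [Matrix.mul_apply, Matrix.transpose_apply, Matrix.one_apply]
  by_cases hjj : j = j'
  · subst hjj
    rw [if_pos rfl]
    have hcard : 0 < (Finset.univ.filter fun i' => f i' = j).card := by
      obtain ⟨i, hi⟩ := hf j
      exact Finset.card_pos.2 ⟨i, by simp [hi]⟩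
    have hc0 : (0:ℝ) < ((Finset.univ.filter fun i' => f i' = j).card : ℝ) := by
      exact_mod_cast hcard
    have hterm : ∀ i, X i j * X i j =
        if f i = j then 1 / ((Finset.univ.filter fun i' => f i' = j).card : ℝ) else 0 := by
      intro i
      rw [hX]
      by_cases hfi : f i = j
      · rw [if_pos hfi, if_pos hfi, div_mul_div_comm, one_mul,
          Real.mul_self_sqrt (le_of_lt hc0)]
      · rw [if_neg hfi, if_neg hfi, mul_zero]
    rw [Finset.sum_congr rfl fun i _ => hterm i, ← Finset.sum_filter,
      Finset.sum_const, nsmul_eq_mul]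
    field_simp
  · rw [if_neg hjj]
    apply Finset.sum_eq_zero
    intro i _
    rw [hX i j, hX i j']
    by_cases h1 : f i = j
    · have hne : f i ≠ j' := fun h2 => hjj (h1.symm.trans h2)
      rw [if_neg hne, mul_zero]
    · rw [if_neg h1, zero_mul]

lemma rectId_mul_transpose {k d : ℕ} (hkd : k ≤ d) :
    rectId k d * (rectId k d)ᵀ = (1 : Matrix (Fin k) (Fin k) ℝ) := by
  ext i j
  simp only [Matrix.mul_apply, Matrix.transpose_apply, rectId, Matrix.of_apply,
    Matrix.one_apply]
  by_cases hij : i = j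
  · subst hij
    rw [if_pos rfl, Finset.sum_eq_single (Fin.castLE hkd i)]
    · simp [Fin.castLE]
    · intro b _ hb
      rw [if_neg fun h => hb (Fin.ext h.symm), zero_mul]
    · intro h; exact absurd (Finset.mem_univ _) h
  · rw [if_neg hij]
    apply Finset.sum_eq_zero
    intro l _
    by_cases h1 : (i : ℕ) = (l : ℕ)
    · have hne : ¬ (j : ℕ) = (l : ℕ) := fun h2 => hij (Fin.ext (h1.trans h2.symm))
      rw [if_neg hne, mul_zero]
    · rw [if_neg h1, zero_mul]

/-- For any orthogonal `Q`, `C_Φ ≤ C_Ψ ≤ C_Φ + 2‖Ψ − Φ I_{k×d} Q‖_F`. -/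
theorem statement0 {n k d : ℕ} (hnk : k ≤ n) (hkd : k ≤ d)
    (U : Matrix (Fin n) (Fin n) ℝ) (hU : Uᵀ * U = 1)
    (R : Matrix (Fin n) (Fin d) ℝ)
    (Φ : Matrix (Fin n) (Fin k) ℝ) (hΦ : Φ = U * rectId n k)
    (Ψ : Matrix (Fin n) (Fin d) ℝ) (hΨ : Ψ = Φ * Φᵀ * R)
    (Q : Matrix (Fin d) (Fin d) ℝ) (hQ : Qᵀ * Q = 1)
    (XΦ XΨ : Matrix (Fin n) (Fin k) ℝ)
    (hXΦ : IsOptAssign Φ XΦ) (hXΨ : IsOptAssign Ψ XΨ) :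
    kmeansCost Φ XΦ ≤ kmeansCost Φ XΨ ∧
      kmeansCost Φ XΨ ≤ kmeansCost Φ XΦ + 2 * frob (Ψ - Φ * rectId k d * Q) := by
  constructor
  · exact hXΦ.2 XΨ hXΨ.1
  · -- notation
    set P : Matrix (Fin n) (Fin n) ℝ := XΨ * XΨᵀ with hP
    set P' : Matrix (Fin n) (Fin n) ℝ := XΦ * XΦᵀ with hP'
    set B : Matrix (Fin k) (Fin d) ℝ := rectId k d * Q with hBdef
    set E : Matrix (Fin n) (Fin d) ℝ := Ψ - Φ * rectId k d * Q with hE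
    have hQ' : Q * Qᵀ = 1 := mul_eq_one_comm.mp hQ
    have hB : B * Bᵀ = 1 := by
      rw [hBdef, Matrix.transpose_mul, Matrix.mul_assoc, ← Matrix.mul_assoc Q, hQ',
        Matrix.one_mul, rectId_mul_transpose hkd]
    have projProps : ∀ (X : Matrix (Fin n) (Fin k) ℝ), IsIndicator X →
        (X * Xᵀ)ᵀ = X * Xᵀ ∧ (X * Xᵀ) * (X * Xᵀ) = X * Xᵀ := by
      intro X hX
      refine ⟨by rw [Matrix.transpose_mul, Matrix.transpose_transpose], ?_⟩
      rw [Matrix.mul_assoc, ← Matrix.mul_assoc Xᵀ, indicator_orth hX, Matrix.one_mul]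
    obtain ⟨hPt, hPP⟩ := projProps XΨ hXΨ.1
    obtain ⟨hPt', hPP'⟩ := projProps XΦ hXΦ.1
    have hΦB : Φ * rectId k d * Q = Φ * B := by rw [hBdef, Matrix.mul_assoc]
    -- step 1 : kmeansCost Φ XΨ = frob (Φ*B - P*(Φ*B))
    have s1 : kmeansCost Φ XΨ = frob (Φ * B - P * (Φ * B)) := by
      rw [kmeansCost, ← hP, ← frob_mul_rowOrtho _ B hB, Matrix.sub_mul, Matrix.mul_assoc]
    -- step 2 : Φ*B - P*(Φ*B) = (Ψ - P*Ψ) - (E - P*E)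
    have s2 : Φ * B - P * (Φ * B) = (Ψ - P * Ψ) - (E - P * E) := by
      rw [hE, hΦB, Matrix.mul_sub]
      abel
    have s3 : frob (E - P * E) ≤ frob E := frob_proj_contract P hPt hPP E
    have s4 : frob (Ψ - P * Ψ) = kmeansCost Ψ XΨ := by rw [kmeansCost, ← hP]
    have s5 : kmeansCost Ψ XΨ ≤ kmeansCost Ψ XΦ := hXΨ.2 XΦ hXΦ.1
    have s6 : kmeansCost Ψ XΦ = frob (Ψ - P' * Ψ) := by rw [kmeansCost, ← hP']
    have s7 : Ψ - P' * Ψ = (Φ * B - P' * (Φ * B)) + (E - P' * E) := by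
      have hΨE : Ψ = Φ * B + E := by rw [hE, hΦB]; abel
      rw [hΨE, Matrix.mul_add]
      abel
    have s8 : frob (E - P' * E) ≤ frob E := frob_proj_contract P' hPt' hPP' E
    have s9 : frob (Φ * B - P' * (Φ * B)) = kmeansCost Φ XΦ := by
      rw [kmeansCost, ← frob_mul_rowOrtho (Φ - XΦ * XΦᵀ * Φ) B hB]
      congr 1
      rw [Matrix.sub_mul, hP']
      simp only [Matrix.mul_assoc]
    calc kmeansCost Φ XΨ = frob ((Ψ - P * Ψ) - (E - P * E)) := by rw [s1, s2]
      _ ≤ frob (Ψ - P * Ψ) + frob (E - P * E) := frob_sub_le' _ _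
      _ ≤ kmeansCost Ψ XΦ + frob E := by rw [s4]; linarith
      _ = frob ((Φ * B - P' * (Φ * B)) + (E - P' * E)) + frob E := by rw [s6, s7]
      _ ≤ (frob (Φ * B - P' * (Φ * B)) + frob (E - P' * E)) + frob E := by
          have := frob_add_le (Φ * B - P' * (Φ * B)) (E - P' * E); linarith
      _ ≤ kmeansCost Φ XΦ + 2 * frob E := by rw [s9] at *; linarith
end
end

section
/- Let n ≥ k, d ≥ k and t ≥ 0. If every singular value σ_i of R' = Φᵀ R ∈ ℝ^{k×d} satisfies |σ_i − 1| ≤ (√k + t)/√d, then there exists an orthogonal matrix Q ∈ ℝ^{d×d} such that ‖Ψ − Φ I_{k×d} Q‖_F ≤ √(k/d)·(√k + t). -/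
open Matrix MeasureTheory ProbabilityTheory Finset

noncomputable section

lemma sum_ite_eq_val {m : ℕ} (g : Fin m → ℝ) (c : ℕ) :
    (∑ l : Fin m, (if c = (l : ℕ) then (1 : ℝ) else 0) * g l)
      = if h : c < m then g ⟨c, h⟩ else 0 := by
  by_cases h : c < m
  · rw [dif_pos h, Finset.sum_eq_single (⟨c, h⟩ : Fin m)]
    · simp
    · intro l _ hl
      have : c ≠ (l : ℕ) := fun hc => hl (Fin.ext hc.symm)
      simp [this]
    · simp
  · rw [dif_neg h]
    refine Finset.sum_eq_zero fun l _ => ?_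
    have hl := l.isLt
    have : c ≠ (l : ℕ) := by omega
    simp [this]

lemma sum_mul_ite_eq_val {m : ℕ} (g : Fin m → ℝ) (c : ℕ) :
    (∑ l : Fin m, g l * (if (l : ℕ) = c then (1 : ℝ) else 0))
      = if h : c < m then g ⟨c, h⟩ else 0 := by
  rw [← sum_ite_eq_val g c]
  refine Finset.sum_congr rfl fun l _ => ?_
  by_cases h : (l : ℕ) = c
  · simp [h, mul_comm]
  · have h2 : c ≠ (l : ℕ) := fun hc => h hc.symm
    simp [h, h2]

lemma transpose_rectId (a b : ℕ) : (rectId a b)ᵀ = rectId b a := by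
  ext i j
  simp [rectId, Matrix.transpose_apply, eq_comm]

lemma rectId_mul_transpose_s2 {a b : ℕ} (h : a ≤ b) : rectId a b * (rectId a b)ᵀ = 1 := by
  ext i j
  rw [Matrix.mul_apply]
  simp only [Matrix.transpose_apply, rectId, Matrix.of_apply]
  rw [Finset.sum_eq_single (Fin.castLE h i)]
  · simp [Matrix.one_apply, Fin.ext_iff, eq_comm]
  · intro l _ hl
    have : (i : ℕ) ≠ (l : ℕ) := fun hc => hl (by ext; simpa using hc.symm)
    simp [this]
  · simp

lemma frob_eq_sqrt_trace {a b : ℕ} (M : Matrix (Fin a) (Fin b) ℝ) :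
    frob M = Real.sqrt (Mᵀ * M).trace := by
  unfold frob
  congr 1
  rw [Matrix.trace, Finset.sum_comm]
  simp [Matrix.diag, Matrix.mul_apply, pow_two]

lemma conj_cancel {a b c : ℕ} (P : Matrix (Fin a) (Fin b) ℝ) (M : Matrix (Fin b) (Fin c) ℝ)
    (hP : Pᵀ * P = 1) : (P * M)ᵀ * (P * M) = Mᵀ * M := by
  rw [Matrix.transpose_mul, Matrix.mul_assoc, ← Matrix.mul_assoc Pᵀ P M, hP, Matrix.one_mul]

lemma trace_conj_right {a b : ℕ} (Y : Matrix (Fin a) (Fin a) ℝ) (W : Matrix (Fin a) (Fin b) ℝ)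
    (hW : W * Wᵀ = 1) : ((Y * W)ᵀ * (Y * W)).trace = (Yᵀ * Y).trace := by
  rw [Matrix.transpose_mul]
  have h : Wᵀ * Yᵀ * (Y * W) = Wᵀ * (Yᵀ * Y * W) := by simp only [Matrix.mul_assoc]
  rw [h, Matrix.trace_mul_comm, Matrix.mul_assoc, hW, Matrix.mul_one]

/-- if every singular value of `R' = Φᵀ R` is within `(√k + t)/√d` of `1`,
then some orthogonal `Q` satisfies `‖Ψ − Φ I_{k×d} Q‖_F ≤ √(k/d)(√k + t)`. -/
theorem statement2 {n k d : ℕ} (hnk : k ≤ n) (hkd : k ≤ d) (t : ℝ) (ht : 0 ≤ t)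
    (U : Matrix (Fin n) (Fin n) ℝ) (hU : Uᵀ * U = 1)
    (R : Matrix (Fin n) (Fin d) ℝ)
    (Φ : Matrix (Fin n) (Fin k) ℝ) (hΦ : Φ = U * rectId n k)
    (Ψ : Matrix (Fin n) (Fin d) ℝ) (hΨ : Ψ = Φ * Φᵀ * R)
    (hH : (Φᵀ * R * (Φᵀ * R)ᵀ).IsHermitian)
    (hsing : ∀ i : Fin k,
      |Real.sqrt (hH.eigenvalues i) - 1| ≤ (Real.sqrt k + t) / Real.sqrt d) :
    ∃ Q : Matrix (Fin d) (Fin d) ℝ, Qᵀ * Q = 1 ∧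
      frob (Ψ - Φ * rectId k d * Q) ≤ Real.sqrt (k / d) * (Real.sqrt k + t) := by
  classical
  set R' := Φᵀ * R with hR'def
  have hΦΦ : Φᵀ * Φ = 1 := by
    rw [hΦ, Matrix.transpose_mul, Matrix.mul_assoc, ← Matrix.mul_assoc Uᵀ U, hU,
      Matrix.one_mul, transpose_rectId, ← transpose_rectId k n]
    exact rectId_mul_transpose_s2 hnk
  set lam := hH.eigenvalues with hlamdef
  have hlam0 : ∀ i, 0 ≤ lam i := by
    intro i
    have hconj : R'ᴴ = R'ᵀ := by ext i j; simp [Matrix.conjTranspose_apply]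
    have hps : (R' * R'ᵀ).PosSemidef := by
      rw [← hconj]; exact Matrix.posSemidef_self_mul_conjTranspose R'
    exact hps.eigenvalues_nonneg i
  set A : Matrix (Fin k) (Fin k) ℝ := (hH.eigenvectorUnitary : Matrix (Fin k) (Fin k) ℝ)
    with hAdef
  have hstarA : star A = Aᵀ := by
    ext i j
    simp [Matrix.star_apply]
  have hA1 : Aᵀ * A = 1 := by
    rw [← hstarA]
    exact (Matrix.mem_unitaryGroup_iff').mp hH.eigenvectorUnitary.2
  have hA2 : A * Aᵀ = 1 := by
    rw [← hstarA]
    exact (Matrix.mem_unitaryGroup_iff).mp hH.eigenvectorUnitary.2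
  have hspec : R' * R'ᵀ = A * Matrix.diagonal lam * Aᵀ := by
    have h := hH.spectral_theorem
    rw [← hstarA]
    rw [h, Unitary.conjStarAlgAut_apply]
    rfl
  set G := Aᵀ * R' with hGdef
  have hGG : G * Gᵀ = Matrix.diagonal lam := by
    have h1 : G * Gᵀ = Aᵀ * (R' * R'ᵀ * A) := by
      rw [hGdef, Matrix.transpose_mul, Matrix.transpose_transpose]
      simp only [Matrix.mul_assoc]
    rw [h1, hspec]
    simp only [← Matrix.mul_assoc]
    rw [hA1, Matrix.one_mul, Matrix.mul_assoc, hA1, Matrix.mul_one]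
  set sig : Fin k → ℝ := fun i => Real.sqrt (lam i) with hsigdef
  have hGrow : ∀ i i' : Fin k, (∑ j, G i j * G i' j) = if i = i' then lam i else 0 := by
    intro i i'
    have h := congrFun (congrFun hGG i) i'
    simpa [Matrix.mul_apply, Matrix.diagonal_apply, Matrix.transpose_apply] using h
  -- the orthonormal family
  set v : Fin d → EuclideanSpace ℝ (Fin d) :=
    fun i => if h : (i : ℕ) < k then
      (sig ⟨(i : ℕ), h⟩)⁻¹ • WithLp.toLp 2 (fun j => G ⟨(i : ℕ), h⟩ j) else 0 with hvdef
  set s : Set (Fin d) := {i | ∃ h : (i : ℕ) < k, lam ⟨(i : ℕ), h⟩ ≠ 0} with hsdef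
  have hvon : Orthonormal ℝ (s.restrict v) := by
    rw [orthonormal_iff_ite]
    rintro ⟨i, hi, hli⟩ ⟨i', hi', hli'⟩
    have hlpos : 0 < lam ⟨(i : ℕ), hi⟩ := lt_of_le_of_ne (hlam0 _) (Ne.symm hli)
    change inner ℝ (v i) (v i') = _
    rw [hvdef]
    simp only [dif_pos hi, dif_pos hi']
    rw [inner_smul_left, inner_smul_right, PiLp.inner_apply]
    simp only [RCLike.inner_apply, conj_trivial]
    rw [hGrow]
    by_cases hii : i = i'
    · subst hii
      rw [if_pos rfl, if_pos rfl]
      simp only [conj_trivial, hsigdef]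
      rw [← mul_assoc, ← mul_inv, Real.mul_self_sqrt (hlam0 _), inv_mul_cancel₀ (ne_of_gt hlpos)]
    · have h1 : ((⟨(i : ℕ), hi⟩ : Fin k) = ⟨(i' : ℕ), hi'⟩) ↔ False := by
        simp only [Fin.mk.injEq, iff_false]
        intro hc
        exact hii (Fin.ext hc)
      have h2 : ((⟨i, ⟨hi, hli⟩⟩ : s) = ⟨i', ⟨hi', hli'⟩⟩) ↔ False := by
        simp only [Subtype.mk.injEq, iff_false]
        exact hii
      rw [if_neg (fun hc => h1.mp hc.symm), if_neg (h2.mp ∘ id)]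
      simp
  obtain ⟨b, hb⟩ := hvon.exists_orthonormalBasis_extension_of_card_eq (by simp)
  have hbo : ∀ i j : Fin d, (∑ l, b i l * b j l) = if i = j then 1 else 0 := by
    intro i j
    have h := (orthonormal_iff_ite.mp b.orthonormal) i j
    simpa [PiLp.inner_apply, RCLike.inner_apply, mul_comm] using h
  have hkey : ∀ (i : Fin k) (j : Fin d), G i j = sig i * b (Fin.castLE hkd i) j := by
    intro i j
    by_cases hl : lam i = 0
    · have hszero : sig i = 0 := by rw [hsigdef]; simp [hl]
      have hsum : (∑ l, G i l * G i l) = 0 := by rw [hGrow]; simp [hl]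
      have hz := (Finset.sum_eq_zero_iff_of_nonneg
        (fun l _ => mul_self_nonneg (G i l))).mp hsum j (Finset.mem_univ j)
      rw [mul_self_eq_zero.mp hz, hszero, zero_mul]
    · have hik : ((Fin.castLE hkd i : Fin d) : ℕ) < k := by simpa using i.isLt
      have hmem : (Fin.castLE hkd i : Fin d) ∈ s := ⟨hik, hl⟩
      have hbv := hb _ hmem
      rw [hbv, hvdef]
      simp only [dif_pos hik]
      have hsne : sig i ≠ 0 := by
        rw [hsigdef]
        exact Real.sqrt_ne_zero'.mpr (lt_of_le_of_ne (hlam0 i) (Ne.symm hl))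
      show G i j = sig i * ((sig i)⁻¹ * G i j)
      rw [← mul_assoc, mul_inv_cancel₀ hsne, one_mul]
  set B : Matrix (Fin d) (Fin d) ℝ := Matrix.of (fun i j => b j i) with hBdef
  have hBtB : Bᵀ * B = 1 := by
    ext i j
    rw [Matrix.mul_apply]
    simp only [Matrix.transpose_apply, hBdef, Matrix.of_apply, Matrix.one_apply]
    exact hbo i j
  have hBBt : B * Bᵀ = 1 := mul_eq_one_comm.mp hBtB
  set W := rectId k d * Bᵀ with hWdef
  have hWap : ∀ (i : Fin k) (j : Fin d), W i j = b (Fin.castLE hkd i) j := by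
    intro i j
    rw [hWdef, Matrix.mul_apply]
    simp only [rectId, Matrix.of_apply, Matrix.transpose_apply, hBdef]
    rw [sum_ite_eq_val (fun l => b l j) (i : ℕ), dif_pos (lt_of_lt_of_le i.isLt hkd)]
    rfl
  have hWWt : W * Wᵀ = 1 := by
    rw [hWdef, Matrix.transpose_mul, Matrix.transpose_transpose, Matrix.mul_assoc,
      ← Matrix.mul_assoc Bᵀ B, hBtB, Matrix.one_mul]
    exact rectId_mul_transpose_s2 hkd
  have hGW : G = Matrix.diagonal sig * W := by
    ext i j
    rw [Matrix.diagonal_mul, hWap, hkey]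
  -- the big orthogonal matrix
  set E : Fin k ⊕ Fin (d - k) ≃ Fin d :=
    finSumFinEquiv.trans (finCongr (Nat.add_sub_cancel' hkd)) with hEdef
  set C : Matrix (Fin d) (Fin d) ℝ :=
    ((Matrix.fromBlocks A 0 0 (1 : Matrix (Fin (d - k)) (Fin (d - k)) ℝ)).submatrix
      E.symm E.symm) with hCdef
  have hCtC : Cᵀ * C = 1 := by
    rw [hCdef, Matrix.transpose_submatrix, Matrix.fromBlocks_transpose,
      Matrix.submatrix_mul_equiv, Matrix.fromBlocks_multiply]
    simp [hA1]
  refine ⟨C * Bᵀ, ?_, ?_⟩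
  · rw [Matrix.transpose_mul, Matrix.transpose_transpose, Matrix.mul_assoc,
      ← Matrix.mul_assoc Cᵀ C, hCtC, Matrix.one_mul, hBBt]
  have hIC : rectId k d * C = A * rectId k d := by
    ext i j
    rw [Matrix.mul_apply, Matrix.mul_apply]
    simp only [rectId, Matrix.of_apply]
    rw [sum_ite_eq_val (fun l => C l j) (i : ℕ),
      sum_mul_ite_eq_val (fun l => A i l) (j : ℕ),
      dif_pos (lt_of_lt_of_le i.isLt hkd)]
    have hEi : E.symm ⟨(i : ℕ), lt_of_lt_of_le i.isLt hkd⟩ = Sum.inl i := by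
      rw [Equiv.symm_apply_eq]
      ext
      simp [hEdef]
    rw [hCdef, Matrix.submatrix_apply, hEi]
    rcases hsj : E.symm j with j' | j''
    · have hj : j = E (Sum.inl j') := by rw [← hsj, Equiv.apply_symm_apply]
      have hjval : (j : ℕ) = (j' : ℕ) := by rw [hj]; simp [hEdef]
      have hjk : (j : ℕ) < k := by rw [hjval]; exact j'.isLt
      rw [Matrix.fromBlocks_apply₁₁, dif_pos hjk]
      congr 1
      exact Fin.ext hjval.symm
    · have hj : j = E (Sum.inr j'') := by rw [← hsj, Equiv.apply_symm_apply]
      have hjval : (j : ℕ) = k + (j'' : ℕ) := by rw [hj]; simp [hEdef]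
      have hjk : ¬ (j : ℕ) < k := by omega
      rw [Matrix.fromBlocks_apply₁₂, dif_neg hjk]
      simp
  have hIQ : rectId k d * (C * Bᵀ) = A * W := by
    rw [← Matrix.mul_assoc, hIC, Matrix.mul_assoc, hWdef]
  have hRA : R' = A * G := by
    rw [hGdef, ← Matrix.mul_assoc, hA2, Matrix.one_mul]
  have hdiff : Ψ - Φ * rectId k d * (C * Bᵀ)
      = Φ * (A * (Matrix.diagonal (fun i => sig i - 1) * W)) := by
    rw [hΨ, Matrix.mul_assoc Φ Φᵀ R, ← hR'def, Matrix.mul_assoc Φ (rectId k d) (C * Bᵀ),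
      hIQ, ← Matrix.mul_sub]
    congr 1
    rw [hRA, hGW, ← Matrix.mul_sub]
    congr 1
    ext i j
    simp [Matrix.sub_apply, Matrix.diagonal_mul, sub_mul]
  rw [hdiff, frob_eq_sqrt_trace, conj_cancel Φ _ hΦΦ, conj_cancel A _ hA1,
    trace_conj_right _ _ hWWt]
  have htr : ((Matrix.diagonal fun i => sig i - 1)ᵀ
      * Matrix.diagonal fun i => sig i - 1).trace = ∑ i, (sig i - 1) ^ 2 := by
    rw [Matrix.diagonal_transpose, Matrix.diagonal_mul_diagonal, Matrix.trace_diagonal]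
    simp [pow_two]
  rw [htr]
  have hbound : (∑ i, (sig i - 1) ^ 2)
      ≤ (k : ℝ) * ((Real.sqrt k + t) / Real.sqrt d) ^ 2 := by
    calc (∑ i, (sig i - 1) ^ 2)
        ≤ ∑ _i : Fin k, ((Real.sqrt k + t) / Real.sqrt d) ^ 2 := by
          refine Finset.sum_le_sum fun i _ => ?_
          have h := hsing i
          calc (sig i - 1) ^ 2 = |sig i - 1| ^ 2 := (sq_abs _).symm
            _ ≤ ((Real.sqrt k + t) / Real.sqrt d) ^ 2 :=
              pow_le_pow_left₀ (abs_nonneg _) h 2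
      _ = (k : ℝ) * ((Real.sqrt k + t) / Real.sqrt d) ^ 2 := by
          rw [Finset.sum_const, Finset.card_univ, Fintype.card_fin, nsmul_eq_mul]
  have hc : 0 ≤ (Real.sqrt k + t) / Real.sqrt d :=
    div_nonneg (by positivity) (Real.sqrt_nonneg _)
  calc Real.sqrt (∑ i, (sig i - 1) ^ 2)
      ≤ Real.sqrt ((k : ℝ) * ((Real.sqrt k + t) / Real.sqrt d) ^ 2) :=
        Real.sqrt_le_sqrt hbound
    _ = Real.sqrt k * ((Real.sqrt k + t) / Real.sqrt d) := by
        rw [Real.sqrt_mul (by positivity), Real.sqrt_sq hc]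
    _ = Real.sqrt ((k : ℝ) / d) * (Real.sqrt k + t) := by
        rw [Real.sqrt_div (by positivity)]
        ring
end
end

section
/- Let n ≥ k, d ≥ k and t ≥ 0. If every singular value σ_i of R' = Φᵀ R ∈ ℝ^{k×d} satisfies |σ_i − 1| ≤ (√k + t)/√d, then the SC cost C_Φ and the CSC cost C_Ψ satisfy C_Φ ≤ C_Ψ ≤ C_Φ + 2·√(k/d)·(√k + t). -/
open Matrix MeasureTheory ProbabilityTheory Finset

noncomputable section

def frobSq {a b : ℕ} (M : Matrix (Fin a) (Fin b) ℝ) : ℝ := ∑ i, ∑ j, (M i j) ^ 2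

lemma frobSq_nonneg {a b : ℕ} (M : Matrix (Fin a) (Fin b) ℝ) : 0 ≤ frobSq M :=
  Finset.sum_nonneg fun _ _ => Finset.sum_nonneg fun _ _ => sq_nonneg _

lemma frobSq_eq_trace {a b : ℕ} (M : Matrix (Fin a) (Fin b) ℝ) :
    frobSq M = (Mᵀ * M).trace := by
  rw [Matrix.trace, frobSq, Finset.sum_comm]
  refine Finset.sum_congr rfl fun j _ => ?_
  simp [Matrix.mul_apply, Matrix.diag, pow_two]

lemma diag_trace_bound {n k : ℕ} (B : Matrix (Fin n) (Fin k) ℝ) (f : Fin k → ℝ) :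
    (B * Matrix.diagonal f * Bᵀ).trace = ∑ j, f j * ∑ i, (B i j)^2 := by
  have : ∀ i : Fin n, (B * Matrix.diagonal f * Bᵀ).diag i = ∑ j, f j * (B i j)^2 := by
    intro i
    simp [Matrix.diag, Matrix.mul_apply, Matrix.diagonal_apply, mul_ite, ite_mul, mul_zero,
      zero_mul, Finset.sum_ite_eq', pow_two]
    exact Finset.sum_congr rfl fun j _ => by ring
  rw [Matrix.trace]
  simp only [this]
  rw [Finset.sum_comm]
  exact Finset.sum_congr rfl fun j _ => by rw [Finset.mul_sum]

lemma trace_form_bounds {n k : ℕ} (A : Matrix (Fin n) (Fin k) ℝ)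
    {S : Matrix (Fin k) (Fin k) ℝ} (hS : S.IsHermitian) {lo hi : ℝ}
    (hlo : ∀ i, lo ≤ hS.eigenvalues i) (hhi : ∀ i, hS.eigenvalues i ≤ hi) :
    lo * (A * Aᵀ).trace ≤ (A * S * Aᵀ).trace ∧ (A * S * Aᵀ).trace ≤ hi * (A * Aᵀ).trace := by
  set V : Matrix (Fin k) (Fin k) ℝ := (hS.eigenvectorUnitary : Matrix (Fin k) (Fin k) ℝ) with hV
  have hspec : S = V * Matrix.diagonal hS.eigenvalues * Vᵀ := by
    have := hS.spectral_theorem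
    simpa [← Matrix.conjTranspose_eq_transpose_of_trivial, Function.comp,
      Matrix.star_eq_conjTranspose] using this
  have hVV : V * Vᵀ = 1 := by
    rw [← Matrix.conjTranspose_eq_transpose_of_trivial, ← Matrix.star_eq_conjTranspose]
    exact (Matrix.mem_unitaryGroup_iff).mp hS.eigenvectorUnitary.2
  have h1 : A * S * Aᵀ = (A * V) * Matrix.diagonal hS.eigenvalues * (A * V)ᵀ := by
    have := congrArg (fun M => A * M * Aᵀ) hspec
    rw [this, Matrix.transpose_mul]
    simp only [Matrix.mul_assoc]
  have h2 : A * Aᵀ = (A * V) * (A * V)ᵀ := by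
    rw [Matrix.transpose_mul, ← Matrix.mul_assoc, Matrix.mul_assoc A V Vᵀ, hVV,
      Matrix.mul_one]
  have h3 : ((A * V) * (A * V)ᵀ).trace = ∑ j, ∑ i, ((A * V) i j)^2 := by
    rw [Matrix.trace_mul_comm, ← frobSq_eq_trace, frobSq, Finset.sum_comm]
  rw [h1, h2, diag_trace_bound, h3]
  constructor
  · rw [Finset.mul_sum]
    exact Finset.sum_le_sum fun j _ => mul_le_mul_of_nonneg_right (hlo j)
      (Finset.sum_nonneg fun _ _ => sq_nonneg _)
  · rw [Finset.mul_sum]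
    exact Finset.sum_le_sum fun j _ => mul_le_mul_of_nonneg_right (hhi j)
      (Finset.sum_nonneg fun _ _ => sq_nonneg _)

lemma indicator_orthonormal {n k : ℕ} {X : Matrix (Fin n) (Fin k) ℝ}
    (f : Fin n → Fin k) (h : IsIndicatorOf f X) : Xᵀ * X = 1 := by
  obtain ⟨hsurj, hX⟩ := h
  ext j j'
  rw [Matrix.mul_apply]
  simp only [Matrix.transpose_apply]
  rcases eq_or_ne j j' with rfl | hne
  · set c := (Finset.univ.filter fun i' => f i' = j).card with hc
    have hcpos : 0 < c := by
      obtain ⟨i, hi⟩ := hsurj j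
      exact Finset.card_pos.mpr ⟨i, by simp [hi]⟩
    have : ∀ i, X i j * X i j = if f i = j then 1 / (c : ℝ) else 0 := by
      intro i
      rw [hX i j]
      rcases eq_or_ne (f i) j with h' | h' <;> simp [h', ← hc]
      rw [← mul_inv, Real.mul_self_sqrt (by positivity)]
    rw [Finset.sum_congr rfl fun i _ => this i, Finset.sum_ite, Finset.sum_const,
      Finset.sum_const_zero, add_zero]
    simp only [Matrix.one_apply_eq, nsmul_eq_mul, ← hc]
    field_simp
  · have : ∀ i, X i j * X i j' = 0 := by
      intro i
      rw [hX i j, hX i j']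
      rcases eq_or_ne (f i) j' with h' | h' <;>
        rcases eq_or_ne (f i) j with h2 | h2 <;> simp_all
    simp [this, Matrix.one_apply, hne]

lemma rectId_tt {n k : ℕ} (hnk : k ≤ n) : (rectId n k)ᵀ * rectId n k = 1 := by
  ext j j'
  rw [Matrix.mul_apply]
  have hjn : (j : ℕ) < n := lt_of_lt_of_le j.2 hnk
  rw [Finset.sum_eq_single (⟨(j : ℕ), hjn⟩ : Fin n)]
  · simp [rectId, Matrix.one_apply, Fin.ext_iff]
  · intro b _ hb
    simp only [Matrix.transpose_apply, rectId, Matrix.of_apply]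
    have : ¬ ((b : ℕ) = (j : ℕ)) := fun h => hb (Fin.ext h)
    simp [this]
  · simp

lemma proj_le {n k m : ℕ} (M : Matrix (Fin n) (Fin m) ℝ) (X : Matrix (Fin n) (Fin k) ℝ)
    (hX : Xᵀ * X = 1) : frobSq (M - X * Xᵀ * M) ≤ frobSq M := by
  set P := X * Xᵀ with hPdef
  have hPt : Pᵀ = P := by rw [hPdef, Matrix.transpose_mul, Matrix.transpose_transpose]
  have hPP : P * P = P := by
    rw [hPdef, Matrix.mul_assoc, ← Matrix.mul_assoc Xᵀ X Xᵀ, hX, Matrix.one_mul]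
  have key : (M - P * M)ᵀ * (M - P * M) = Mᵀ * M - (Xᵀ * M)ᵀ * (Xᵀ * M) := by
    have e1 : (Xᵀ * M)ᵀ * (Xᵀ * M) = Mᵀ * (P * M) := by
      rw [Matrix.transpose_mul, Matrix.transpose_transpose, hPdef]
      simp [Matrix.mul_assoc]
    rw [e1, Matrix.transpose_sub, Matrix.transpose_mul, hPt, Matrix.sub_mul, Matrix.mul_sub,
      Matrix.mul_sub]
    have e2 : Mᵀ * P * (P * M) = Mᵀ * (P * M) := by
      rw [Matrix.mul_assoc, ← Matrix.mul_assoc P P M, hPP]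
    rw [e2, Matrix.mul_assoc]
    abel_nf
    simp [hPdef, Matrix.mul_assoc]
  rw [frobSq_eq_trace, key, Matrix.trace_sub, frobSq_eq_trace]
  have := frobSq_nonneg (Xᵀ * M)
  rw [frobSq_eq_trace] at this
  linarith

/-- if every singular value of `R' = Φᵀ R` is within `(√k + t)/√d` of `1`,
then `C_Φ ≤ C_Ψ ≤ C_Φ + 2√(k/d)(√k + t)`. -/
theorem statement3 {n k d : ℕ} (hnk : k ≤ n) (hkd : k ≤ d) (t : ℝ) (ht : 0 ≤ t)
    (U : Matrix (Fin n) (Fin n) ℝ) (hU : Uᵀ * U = 1)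
    (R : Matrix (Fin n) (Fin d) ℝ)
    (Φ : Matrix (Fin n) (Fin k) ℝ) (hΦ : Φ = U * rectId n k)
    (Ψ : Matrix (Fin n) (Fin d) ℝ) (hΨ : Ψ = Φ * Φᵀ * R)
    (hH : (Φᵀ * R * (Φᵀ * R)ᵀ).IsHermitian)
    (hsing : ∀ i : Fin k,
      |Real.sqrt (hH.eigenvalues i) - 1| ≤ (Real.sqrt k + t) / Real.sqrt d)
    (XΦ XΨ : Matrix (Fin n) (Fin k) ℝ)
    (hXΦ : IsOptAssign Φ XΦ) (hXΨ : IsOptAssign Ψ XΨ) :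
    kmeansCost Φ XΦ ≤ kmeansCost Φ XΨ ∧
      kmeansCost Φ XΨ ≤ kmeansCost Φ XΦ +
        2 * Real.sqrt ((k : ℝ) / d) * (Real.sqrt k + t) := by
  classical
  set R' := Φᵀ * R with hR'
  set S := R' * R'ᵀ with hS
  set ε := (Real.sqrt k + t) / Real.sqrt d with hεdef
  have hε : 0 ≤ ε := div_nonneg (by positivity) (Real.sqrt_nonneg _)
  -- orthonormality facts
  have hΦorth : Φᵀ * Φ = 1 := by
    rw [hΦ, Matrix.transpose_mul, Matrix.mul_assoc, ← Matrix.mul_assoc Uᵀ U _, hU,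
      Matrix.one_mul, rectId_tt hnk]
  obtain ⟨fΦ, hfΦ⟩ := hXΦ.1
  obtain ⟨fΨ, hfΨ⟩ := hXΨ.1
  have hXΦorth : XΦᵀ * XΦ = 1 := indicator_orthonormal fΦ hfΦ
  have hXΨorth : XΨᵀ * XΨ = 1 := indicator_orthonormal fΨ hfΨ
  -- the residual matrices
  set AΦ := Φ - XΦ * XΦᵀ * Φ with hAΦ
  set AΨ := Φ - XΨ * XΨᵀ * Φ with hAΨ
  have hcostΦ : ∀ X : Matrix (Fin n) (Fin k) ℝ, kmeansCost Φ X = frob (Φ - X * Xᵀ * Φ) :=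
    fun X => rfl
  have hcostΨ : ∀ X : Matrix (Fin n) (Fin k) ℝ,
      kmeansCost Ψ X = frob ((Φ - X * Xᵀ * Φ) * R') := by
    intro X
    have : Ψ - X * Xᵀ * Ψ = (Φ - X * Xᵀ * Φ) * R' := by
      rw [hΨ, Matrix.sub_mul, hR']
      simp [Matrix.mul_assoc]
    rw [kmeansCost, this]
  -- part 1
  have part1 : kmeansCost Φ XΦ ≤ kmeansCost Φ XΨ := hXΦ.2 XΨ hXΨ.1
  refine ⟨part1, ?_⟩
  -- eigenvalue bounds
  have hPSD : S.PosSemidef := by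
    have := Matrix.posSemidef_self_mul_conjTranspose R'
    rwa [Matrix.conjTranspose_eq_transpose_of_trivial] at this
  have hlamnn : ∀ i, 0 ≤ hH.eigenvalues i := fun i => hPSD.eigenvalues_nonneg i
  set m : ℝ := max 0 (1 - ε) with hm
  have hmnn : 0 ≤ m := le_max_left _ _
  have hlo : ∀ i, m ^ 2 ≤ hH.eigenvalues i := by
    intro i
    have h1 := abs_le.mp (hsing i)
    have h2 : m ≤ Real.sqrt (hH.eigenvalues i) :=
      max_le (Real.sqrt_nonneg _) (by linarith [h1.1])
    calc m ^ 2 ≤ Real.sqrt (hH.eigenvalues i) ^ 2 := by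
          exact pow_le_pow_left₀ hmnn h2 2
      _ = hH.eigenvalues i := Real.sq_sqrt (hlamnn i)
  have hhi : ∀ i, hH.eigenvalues i ≤ (1 + ε) ^ 2 := by
    intro i
    have h1 := abs_le.mp (hsing i)
    calc hH.eigenvalues i = Real.sqrt (hH.eigenvalues i) ^ 2 := (Real.sq_sqrt (hlamnn i)).symm
      _ ≤ (1 + ε) ^ 2 := pow_le_pow_left₀ (Real.sqrt_nonneg _) (by linarith [h1.2]) 2
  -- trace identities
  have hAR : ∀ A : Matrix (Fin n) (Fin k) ℝ, frobSq (A * R') = (A * S * Aᵀ).trace := by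
    intro A
    rw [frobSq_eq_trace, Matrix.trace_mul_comm, Matrix.transpose_mul, hS]
    simp [Matrix.mul_assoc]
  have hAA : ∀ A : Matrix (Fin n) (Fin k) ℝ, frobSq A = (A * Aᵀ).trace := by
    intro A
    rw [frobSq_eq_trace, Matrix.trace_mul_comm]
  -- frobSq Φ = k
  have hΦk : frobSq Φ = (k : ℝ) := by
    rw [frobSq_eq_trace, hΦorth, Matrix.trace_one]
    simp
  have hAΦk : frobSq AΦ ≤ (k : ℝ) := le_trans (proj_le Φ XΦ hXΦorth) (le_of_eq hΦk)
  have hAΨk : frobSq AΨ ≤ (k : ℝ) := le_trans (proj_le Φ XΨ hXΨorth) (le_of_eq hΦk)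
  -- trace bounds
  have hb1 := (trace_form_bounds AΨ hH hlo hhi).1
  have hb2 := (trace_form_bounds AΦ hH hlo hhi).2
  rw [← hAR, ← hAA] at hb1 hb2
  -- scalar level
  set cΦ := frob AΦ with hcΦ
  set cΨ := frob AΨ with hcΨ
  have hcΦnn : 0 ≤ cΦ := Real.sqrt_nonneg _
  have hcΨnn : 0 ≤ cΨ := Real.sqrt_nonneg _
  have hfrob : ∀ {a b : ℕ} (M : Matrix (Fin a) (Fin b) ℝ), frob M = Real.sqrt (frobSq M) :=
    fun M => rfl
  have hsqk : 0 ≤ Real.sqrt k := Real.sqrt_nonneg _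
  have hcΦk : cΦ ≤ Real.sqrt k := by
    rw [hcΦ, hfrob]
    exact Real.sqrt_le_sqrt hAΦk
  have hcΨk : cΨ ≤ Real.sqrt k := by
    rw [hcΨ, hfrob]
    exact Real.sqrt_le_sqrt hAΨk
  have key1 : m * cΨ ≤ frob (AΨ * R') := by
    rw [hfrob, hcΨ, hfrob]
    calc m * Real.sqrt (frobSq AΨ) = Real.sqrt (m ^ 2 * frobSq AΨ) := by
          rw [Real.sqrt_mul (by positivity), Real.sqrt_sq hmnn]
      _ ≤ Real.sqrt (frobSq (AΨ * R')) := Real.sqrt_le_sqrt hb1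
  have key2 : frob (AΦ * R') ≤ (1 + ε) * cΦ := by
    rw [hfrob, hcΦ, hfrob]
    calc Real.sqrt (frobSq (AΦ * R')) ≤ Real.sqrt ((1 + ε) ^ 2 * frobSq AΦ) :=
          Real.sqrt_le_sqrt hb2
      _ = (1 + ε) * Real.sqrt (frobSq AΦ) := by
          rw [Real.sqrt_mul (by positivity), Real.sqrt_sq (by linarith)]
  have key3 : frob (AΨ * R') ≤ frob (AΦ * R') := by
    have := hXΨ.2 XΦ hXΦ.1
    rwa [hcostΨ XΨ, hcostΨ XΦ, ← hAΨ, ← hAΦ] at this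
  -- combine
  have hme : 1 - ε ≤ m := le_max_right _ _
  have hchain : (1 - ε) * cΨ ≤ (1 + ε) * cΦ := by
    calc (1 - ε) * cΨ ≤ m * cΨ := mul_le_mul_of_nonneg_right hme hcΨnn
      _ ≤ frob (AΨ * R') := key1
      _ ≤ frob (AΦ * R') := key3
      _ ≤ (1 + ε) * cΦ := key2
  have hεcΦ : ε * cΦ ≤ ε * Real.sqrt k := mul_le_mul_of_nonneg_left hcΦk hε
  have hεcΨ : ε * cΨ ≤ ε * Real.sqrt k := mul_le_mul_of_nonneg_left hcΨk hε
  have hfinal : cΨ ≤ cΦ + 2 * ε * Real.sqrt k := by nlinarith [hchain, hεcΦ, hεcΨ]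
  have hrhs : 2 * Real.sqrt ((k : ℝ) / d) * (Real.sqrt k + t) = 2 * ε * Real.sqrt k := by
    rw [Real.sqrt_div (by positivity : (0:ℝ) ≤ (k:ℝ)), hεdef]
    ring
  rw [hcostΦ XΨ, hcostΦ XΦ, ← hAΨ, ← hAΦ, ← hcΨ, ← hcΦ, hrhs]
  exact hfinal
end
end

section
/- Let M ∈ ℝ^{n×m} and let X be the n×k cluster-indicator matrix of a partition of {1,…,n} into k nonempty clusters c₁,…,c_k. Then ‖M − X Xᵀ M‖_F² = Σ_{j=1}^{k} Σ_{i∈c_j} ‖m_i − μ_j‖₂², where m_i denotes the i-th row of M and μ_j = (1/|c_j|) Σ_{i∈c_j} m_i is the centroid of cluster j. -/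
open Matrix MeasureTheory ProbabilityTheory Finset

noncomputable section

/-- the squared k-means cost equals the sum of squared distances of the
rows of `M` to their cluster centroids. -/
theorem statement7 {n m k : ℕ} (M : Matrix (Fin n) (Fin m) ℝ)
    (f : Fin n → Fin k) (X : Matrix (Fin n) (Fin k) ℝ) (hX : IsIndicatorOf f X)
    (μ : Fin k → Fin m → ℝ)
    (hμ : ∀ j l, μ j l =
      (∑ i ∈ Finset.univ.filter fun i' => f i' = j, M i l) /
        ((Finset.univ.filter fun i' => f i' = j).card : ℝ)) :
    frob (M - X * Xᵀ * M) ^ 2 =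
      ∑ j : Fin k, ∑ i ∈ Finset.univ.filter fun i' => f i' = j,
        enorm2 (fun l => M i l - μ j l) ^ 2 := by
  obtain ⟨hsurj, hXe⟩ := hX
  have hcard : ∀ j : Fin k, 0 < (Finset.univ.filter fun i' => f i' = j).card := by
    intro j
    obtain ⟨i, hi⟩ := hsurj j
    exact Finset.card_pos.mpr ⟨i, by simp [hi]⟩
  -- entry formula
  have key : ∀ i l, (X * Xᵀ * M) i l = μ (f i) l := by
    intro i l
    set s : ℝ := ((Finset.univ.filter fun i' => f i' = f i).card : ℝ) with hs
    have hc : (0:ℝ) < s := by rw [hs]; exact_mod_cast hcard (f i)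
    have hsqrt : Real.sqrt s * Real.sqrt s = s := Real.mul_self_sqrt hc.le
    have h1 : ∀ i', (X * Xᵀ) i i' = if f i' = f i then 1 / s else 0 := by
      intro i'
      rw [Matrix.mul_apply]
      simp only [Matrix.transpose_apply, hXe]
      rw [Finset.sum_eq_single (f i)]
      · by_cases h : f i' = f i
        · rw [if_pos rfl, if_pos h, div_mul_div_comm, one_mul, hsqrt, if_pos h]
        · simp [h]
      · intro b _ hb
        simp [Ne.symm hb]
      · simp
    rw [hμ, Matrix.mul_apply]
    simp only [h1, ite_mul, zero_mul, one_div]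
    rw [Finset.sum_ite, Finset.sum_const_zero, add_zero, ← hs, ← Finset.mul_sum,
      inv_mul_eq_div]
  -- both sides as raw sums
  have lhs : frob (M - X * Xᵀ * M) ^ 2 = ∑ i, ∑ l, (M i l - μ (f i) l) ^ 2 := by
    rw [frob, Real.sq_sqrt (by positivity)]
    congr 1; ext i; congr 1; ext l
    simp [key i l]
  rw [lhs]
  have rhs : ∀ j : Fin k, ∑ i ∈ Finset.univ.filter fun i' => f i' = j,
      enorm2 (fun l => M i l - μ j l) ^ 2
      = ∑ i ∈ Finset.univ.filter fun i' => f i' = j, ∑ l, (M i l - μ (f i) l) ^ 2 := by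
    intro j
    refine Finset.sum_congr rfl fun i hi => ?_
    have hfi : f i = j := (Finset.mem_filter.mp hi).2
    rw [enorm2, Real.sq_sqrt (by positivity), hfi]
  simp only [rhs]
  exact (Finset.sum_fiberwise_of_maps_to (fun i _ => Finset.mem_univ (f i)) _).symm
end
end

section
/- Let L₁, L₂ ∈ ℝ^{n×n} be symmetric matrices. For s ∈ {1,2}, let V_s ∈ ℝ^{n×n} be orthogonal with L_s = V_s diag(λ₁^{(s)},…,λ_n^{(s)}) V_sᵀ and λ₁^{(s)} ≤ … ≤ λ_n^{(s)}, and let H_s = V_s I_{n×k} I_{k×n} V_sᵀ be the orthogonal projection onto the span of the eigenvectors associated with the k smallest eigenvalues of L_s. If there exists α > 0 with α ≤ λ_{k+1}^{(1)} − λ_k^{(2)} and α ≤ λ_k^{(2)}, then ‖H₂ − H₁‖_F ≤ (√2/α)·‖L₂ − L₁‖_F. -/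
open Matrix MeasureTheory ProbabilityTheory Finset

noncomputable section

lemma rectId_mul {n k : ℕ} (hkn : k ≤ n) :
    rectId n k * rectId k n =
      Matrix.diagonal (fun i : Fin n => if (i:ℕ) < k then (1:ℝ) else 0) := by
  ext i j
  simp only [Matrix.mul_apply, rectId, Matrix.of_apply, Matrix.diagonal_apply]
  by_cases hik : (i:ℕ) < k
  · rw [Finset.sum_eq_single (⟨(i:ℕ), hik⟩ : Fin k)]
    · by_cases hij : i = j
      · subst hij; simp [hik]
      · have h2 : ¬ ((i:ℕ) = (j:ℕ)) := fun h => hij (Fin.ext h)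
        simp [hij, h2]
    · intro b _ hb
      have : (i:ℕ) ≠ (b:ℕ) := fun h => hb (by ext; simp [← h])
      simp [this]
    · simp
  · have h1 : ∀ b : Fin k, (i:ℕ) ≠ (b:ℕ) := fun b => by omega
    have h2 : ¬ (i = j ∧ (j:ℕ) < k) := by
      rintro ⟨rfl, h⟩; exact hik h
    simp only [h1, if_false, Finset.sum_const_zero]
    by_cases hij : i = j
    · subst hij; simp [hik]
    · simp [hij]

lemma sumSq_eq_trace {n : ℕ} (M : Matrix (Fin n) (Fin n) ℝ) :
    ∑ i, ∑ j, (M i j)^2 = Matrix.trace (Mᵀ * M) := by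
  simp only [Matrix.trace, Matrix.diag, Matrix.mul_apply, Matrix.transpose_apply, sq]
  rw [Finset.sum_comm]

lemma sumSq_mul_left {n : ℕ} (U M : Matrix (Fin n) (Fin n) ℝ) (hU : Uᵀ * U = 1) :
    ∑ i, ∑ j, ((U * M) i j)^2 = ∑ i, ∑ j, (M i j)^2 := by
  rw [sumSq_eq_trace, sumSq_eq_trace, Matrix.transpose_mul, Matrix.mul_assoc,
    ← Matrix.mul_assoc Uᵀ U M, hU, Matrix.one_mul]

lemma sumSq_mul_right {n : ℕ} (M U : Matrix (Fin n) (Fin n) ℝ) (hU : U * Uᵀ = 1) :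
    ∑ i, ∑ j, ((M * U) i j)^2 = ∑ i, ∑ j, (M i j)^2 := by
  rw [sumSq_eq_trace, sumSq_eq_trace, Matrix.transpose_mul,
    Matrix.trace_mul_comm (Uᵀ * Mᵀ) (M * U), Matrix.mul_assoc,
    ← Matrix.mul_assoc U Uᵀ Mᵀ, hU, Matrix.one_mul, Matrix.trace_mul_comm M Mᵀ]

lemma conj_diff {n : ℕ} (V1 V2 A B : Matrix (Fin n) (Fin n) ℝ)
    (hV1 : V1ᵀ * V1 = 1) (hV2 : V2ᵀ * V2 = 1) :
    V1ᵀ * ((V2 * A * V2ᵀ - V1 * B * V1ᵀ) * V2) =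
      (V1ᵀ * V2) * A - B * (V1ᵀ * V2) := by
  rw [Matrix.sub_mul, Matrix.mul_sub]
  congr 1
  · rw [Matrix.mul_assoc (V2 * A) V2ᵀ V2, hV2, Matrix.mul_one, ← Matrix.mul_assoc,
      Matrix.mul_assoc V1ᵀ V2 A]
  · rw [Matrix.mul_assoc (V1 * B) V1ᵀ V2, ← Matrix.mul_assoc V1ᵀ (V1 * B),
      ← Matrix.mul_assoc V1ᵀ V1 B, hV1, Matrix.one_mul]

lemma card_filter_lt {n k : ℕ} (hkn : k ≤ n) :
    (Finset.univ.filter fun i : Fin n => (i:ℕ) < k).card = k := by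
  rw [show (Finset.univ.filter fun i : Fin n => (i:ℕ) < k)
      = Finset.map (Fin.castLEEmb hkn) Finset.univ from ?_]
  · simp
  · ext x
    simp only [Finset.mem_filter, Finset.mem_univ, true_and, Finset.mem_map,
      Fin.castLEEmb_apply]
    constructor
    · intro hx; exact ⟨⟨x, hx⟩, rfl⟩
    · rintro ⟨a, rfl⟩; exact a.isLt


set_option maxHeartbeats 1000000 in
/-- perturbation bound for spectral projectors:
`‖H₂ − H₁‖_F ≤ (√2/α) ‖L₂ − L₁‖_F`. -/
theorem statement15 {n k : ℕ} (hk0 : 0 < k) (hkn : k < n) (α : ℝ) (hα : 0 < α)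
    (L1 L2 : Matrix (Fin n) (Fin n) ℝ) (hL1 : L1.IsSymm) (hL2 : L2.IsSymm)
    (V1 V2 : Matrix (Fin n) (Fin n) ℝ) (hV1 : V1ᵀ * V1 = 1) (hV2 : V2ᵀ * V2 = 1)
    (lam1 lam2 : Fin n → ℝ) (hmono1 : Monotone lam1) (hmono2 : Monotone lam2)
    (hdec1 : L1 = V1 * Matrix.diagonal lam1 * V1ᵀ)
    (hdec2 : L2 = V2 * Matrix.diagonal lam2 * V2ᵀ)
    (hgap : α ≤ lam1 ⟨k, hkn⟩ - lam2 ⟨k - 1, by omega⟩)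
    (hlow : α ≤ lam2 ⟨k - 1, by omega⟩)
    (H1 H2 : Matrix (Fin n) (Fin n) ℝ)
    (hH1 : H1 = V1 * rectId n k * rectId k n * V1ᵀ)
    (hH2 : H2 = V2 * rectId n k * rectId k n * V2ᵀ) :
    frob (H2 - H1) ≤ Real.sqrt 2 / α * frob (L2 - L1) := by
  have hV1' : V1 * V1ᵀ = 1 := mul_eq_one_comm.mp hV1
  have hV2' : V2 * V2ᵀ = 1 := mul_eq_one_comm.mp hV2
  set W : Matrix (Fin n) (Fin n) ℝ := V1ᵀ * V2 with hW
  have hWtW : Wᵀ * W = 1 := by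
    rw [hW, Matrix.transpose_mul, Matrix.transpose_transpose, Matrix.mul_assoc,
      ← Matrix.mul_assoc V1 V1ᵀ V2, hV1', Matrix.one_mul, hV2]
  have hWWt : W * Wᵀ = 1 := mul_eq_one_comm.mp hWtW
  set p : Fin n → ℝ := fun i => if (i:ℕ) < k then 1 else 0 with hp
  have hP : rectId n k * rectId k n = Matrix.diagonal p := rectId_mul hkn.le
  -- conjugation preserves the sum of squares
  have key : ∀ M : Matrix (Fin n) (Fin n) ℝ,
      (∑ i, ∑ j, ((V1ᵀ * (M * V2)) i j)^2) = ∑ i, ∑ j, (M i j)^2 := fun M => by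
    rw [sumSq_mul_left _ _ (by rwa [Matrix.transpose_transpose]),
      sumSq_mul_right _ _ hV2']
  have hH2' : H2 = V2 * Matrix.diagonal p * V2ᵀ := by
    rw [hH2, Matrix.mul_assoc V2, hP]
  have hH1' : H1 = V1 * Matrix.diagonal p * V1ᵀ := by
    rw [hH1, Matrix.mul_assoc V1, hP]
  have e1 : V1ᵀ * ((H2 - H1) * V2)
      = W * Matrix.diagonal p - Matrix.diagonal p * W := by
    rw [hH1', hH2']; exact conj_diff V1 V2 _ _ hV1 hV2
  have e2 : V1ᵀ * ((L2 - L1) * V2)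
      = W * Matrix.diagonal lam2 - Matrix.diagonal lam1 * W := by
    rw [hdec1, hdec2]; exact conj_diff V1 V2 _ _ hV1 hV2
  have s1 : ∑ i, ∑ j, ((H2 - H1) i j)^2
      = ∑ i, ∑ j, (W i j)^2 * (p j - p i)^2 := by
    rw [← key (H2 - H1), e1]
    refine Finset.sum_congr rfl fun i _ => Finset.sum_congr rfl fun j _ => ?_
    simp only [Matrix.sub_apply, Matrix.mul_diagonal, Matrix.diagonal_mul]
    ring
  have s2 : ∑ i, ∑ j, ((L2 - L1) i j)^2
      = ∑ i, ∑ j, (W i j)^2 * (lam2 j - lam1 i)^2 := by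
    rw [← key (L2 - L1), e2]
    refine Finset.sum_congr rfl fun i _ => Finset.sum_congr rfl fun j _ => ?_
    simp only [Matrix.sub_apply, Matrix.mul_diagonal, Matrix.diagonal_mul]
    ring
  -- row and column sums of squares of W
  have hrow : ∀ i, ∑ j, (W i j)^2 = 1 := fun i => by
    have := congrArg (fun M : Matrix (Fin n) (Fin n) ℝ => M i i) hWWt
    simpa [Matrix.mul_apply, sq] using this
  have hcol : ∀ j, ∑ i, (W i j)^2 = 1 := fun j => by
    have := congrArg (fun M : Matrix (Fin n) (Fin n) ℝ => M j j) hWtW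
    simpa [Matrix.mul_apply, sq] using this
  set A : ℝ := ∑ i : Fin n, ∑ j : Fin n, (if (i:ℕ) < k ∧ ¬ (j:ℕ) < k then (W i j)^2 else 0) with hA
  set B : ℝ := ∑ i : Fin n, ∑ j : Fin n, (if ¬ (i:ℕ) < k ∧ (j:ℕ) < k then (W i j)^2 else 0) with hB
  set C : ℝ := ∑ i : Fin n, ∑ j : Fin n, (if (i:ℕ) < k ∧ (j:ℕ) < k then (W i j)^2 else 0) with hC
  have hsum_ind : (∑ i : Fin n, (if (i:ℕ) < k then (1:ℝ) else 0)) = k := by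
    rw [Finset.sum_ite, Finset.sum_const, Finset.sum_const]
    simp [card_filter_lt hkn.le]
  have hAC : A + C = (k:ℝ) := by
    rw [hA, hC, ← Finset.sum_add_distrib, ← hsum_ind]
    refine Finset.sum_congr rfl fun i _ => ?_
    rw [← Finset.sum_add_distrib]
    by_cases h1 : (i:ℕ) < k
    · simp only [h1, true_and, if_true]
      rw [← hrow i]
      refine Finset.sum_congr rfl fun j _ => ?_
      by_cases h2 : (j:ℕ) < k <;> simp [h2]
    · simp [h1]
  have hBC : B + C = (k:ℝ) := by
    rw [hB, hC, Finset.sum_comm, Finset.sum_comm (f := fun (i : Fin n) (j : Fin n) => (if (i:ℕ) < k ∧ (j:ℕ) < k then (W i j)^2 else 0)), ← Finset.sum_add_distrib, ← hsum_ind]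
    refine Finset.sum_congr rfl fun j _ => ?_
    rw [← Finset.sum_add_distrib]
    by_cases h2 : (j:ℕ) < k
    · simp only [h2, and_true, if_true]
      rw [← hcol j]
      refine Finset.sum_congr rfl fun i _ => ?_
      by_cases h1 : (i:ℕ) < k <;> simp [h1]
    · simp [h2]
  have hAB : A = B := by linarith
  have hsplit : ∑ i, ∑ j, (W i j)^2 * (p j - p i)^2 = A + B := by
    rw [hA, hB, ← Finset.sum_add_distrib]
    refine Finset.sum_congr rfl fun i _ => ?_
    rw [← Finset.sum_add_distrib]
    refine Finset.sum_congr rfl fun j _ => ?_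
    by_cases h1 : (i:ℕ) < k <;> by_cases h2 : (j:ℕ) < k <;>
      simp [hp, h1, h2] <;> ring
  have hB0 : 0 ≤ B := by
    rw [hB]
    refine Finset.sum_nonneg fun i _ => Finset.sum_nonneg fun j _ => ?_
    positivity
  -- lower bound on the L-side sum
  have hlb : α^2 * B ≤ ∑ i, ∑ j, (W i j)^2 * (lam2 j - lam1 i)^2 := by
    rw [hB, Finset.mul_sum]
    refine Finset.sum_le_sum fun i _ => ?_
    rw [Finset.mul_sum]
    refine Finset.sum_le_sum fun j _ => ?_
    by_cases h : ¬ (i:ℕ) < k ∧ (j:ℕ) < k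
    · rw [if_pos h]
      have h1 : lam1 ⟨k, hkn⟩ ≤ lam1 i := hmono1 (by simp [Fin.le_def]; omega)
      have h2 : lam2 j ≤ lam2 ⟨k - 1, by omega⟩ := hmono2 (by simp [Fin.le_def]; omega)
      have hd : α ≤ lam1 i - lam2 j := by linarith
      have hsq : α^2 ≤ (lam2 j - lam1 i)^2 := by nlinarith
      calc α^2 * (W i j)^2 = (W i j)^2 * α^2 := by ring
        _ ≤ (W i j)^2 * (lam2 j - lam1 i)^2 := by
            exact mul_le_mul_of_nonneg_left hsq (by positivity)
    · rw [if_neg h, mul_zero]; positivity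
  -- final assembly
  have hY0 : 0 ≤ ∑ i : Fin n, ∑ j : Fin n, (W i j)^2 * (lam2 j - lam1 i)^2 :=
    Finset.sum_nonneg fun i _ => Finset.sum_nonneg fun j _ => by positivity
  simp only [frob]
  rw [s1, hsplit, ← hAB, s2]
  set Y : ℝ := ∑ i : Fin n, ∑ j : Fin n, (W i j)^2 * (lam2 j - lam1 i)^2 with hY
  have h1 : A + A ≤ 2 * Y / α^2 := by
    rw [le_div_iff₀ (by positivity : (0:ℝ) < α^2)]
    nlinarith [hlb, hAB]
  calc Real.sqrt (A + A) ≤ Real.sqrt (2 * Y / α^2) := Real.sqrt_le_sqrt h1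
    _ = Real.sqrt 2 / α * Real.sqrt Y := by
        rw [Real.sqrt_div (by positivity : (0:ℝ) ≤ 2 * Y),
          Real.sqrt_mul (by norm_num : (0:ℝ) ≤ 2), Real.sqrt_sq hα.le]
        ring
end
end
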